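/- Let B be a real number with 0 < B ≤ 1 and let k ≤ n be positive integers. Then (1 − B/k)^{n+k} ≤ (1 − B/n)^{2n}, with strict inequality whenever k < n. In other words, over k ∈ {1, …, n} the quantity (1 − B/k)^{n+k} is maximized at k = n. -/

import Mathlib

open Real

theorem stmt10 (B : ℝ) (hB0 : 0 < B) (hB1 : B ≤ 1) (k n : ℕ) (hk : 0 < k) (hkn : k ≤ n) :
    (1 - B / (k : ℝ)) ^ (n + k) ≤ (1 - B / (n : ℝ)) ^ (2 * n)
    ∧ (k < n → (1 - B / (k : ℝ)) ^ (n + k) < (1 - B / (n : ℝ)) ^ (2 * n)) := by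
  have hn : 0 < n := hk.trans_le hkn
  have hk' : (0:ℝ) < k := by exact_mod_cast hk
  have hn' : (0:ℝ) < n := by exact_mod_cast hn
  have hknR : (k:ℝ) ≤ n := by exact_mod_cast hkn
  have h1k : (1:ℝ) ≤ k := by exact_mod_cast hk
  have h1n : (1:ℝ) ≤ n := by exact_mod_cast hn
  have hnk' : (0:ℝ) < (n:ℝ) + k := by linarith
  set t : ℝ := 2*n/((n:ℝ)+k) with ht
  have ht1 : 1 ≤ t := (one_le_div hnk').2 (by linarith)
  have hak : (0:ℝ) ≤ 1 - B / k := by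
    have : B / k ≤ 1 := (div_le_one hk').2 (hB1.trans h1k)
    linarith
  have hb0 : (0:ℝ) ≤ 1 - B / n := by
    have : B / n ≤ 1 := (div_le_one hn').2 (hB1.trans h1n)
    linarith
  have hs : (-1:ℝ) ≤ -(B / n) := by
    have : B / n ≤ 1 := (div_le_one hn').2 (hB1.trans h1n)
    linarith
  have hbern : 1 + t * (-(B/n)) ≤ (1 + (-(B/n)))^t :=
    one_add_mul_self_le_rpow_one_add hs ht1
  have hbern' : 1 - t * (B/n) ≤ (1 - B/n)^t := by
    have h : (1:ℝ) + -(B/n) = 1 - B/n := by ring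
    rw [h] at hbern; linarith
  have hts : t * (B/n) ≤ B/k := by
    rw [ht, div_mul_div_comm, div_le_div_iff₀ (by positivity) hk']
    nlinarith [mul_nonneg (mul_nonneg hB0.le hn'.le) (sub_nonneg.2 hknR)]
  have key : 1 - B/k ≤ (1 - B/n)^t := le_trans (by linarith) hbern'
  have heq : ((1 - B/n)^t)^(n+k) = (1 - B/n)^(2*n) := by
    rw [← rpow_natCast ((1-B/n)^t) (n+k), ← rpow_mul hb0, ← rpow_natCast (1-B/(n:ℝ)) (2*n)]
    congr 1
    push_cast
    field_simp [ht]
    rw [ht, div_mul_cancel₀ _ hnk'.ne']; ring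
  constructor
  · calc (1 - B/(k:ℝ))^(n+k) ≤ ((1 - B/n)^t)^(n+k) := pow_le_pow_left₀ hak key _
      _ = (1 - B/n)^(2*n) := heq
  · intro hlt
    have hltR : (k:ℝ) < n := by exact_mod_cast hlt
    have hts' : t * (B/n) < B/k := by
      rw [ht, div_mul_div_comm, div_lt_div_iff₀ (by positivity) hk']
      nlinarith [mul_pos (mul_pos hB0 hn') (sub_pos.2 hltR)]
    have key' : 1 - B/k < (1 - B/n)^t := lt_of_lt_of_le (by linarith) hbern'
    calc (1 - B/(k:ℝ))^(n+k) < ((1 - B/n)^t)^(n+k) :=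
          pow_lt_pow_left₀ key' hak (by positivity)
      _ = (1 - B/n)^(2*n) := heq
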